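/- Let A ⊆ ℝᵐ, x̂ an interior point of A, f : A → ℝᵏ. Then f is differentiable at x̂ if and only if (1) f is continuous at x̂, (2) for every v ∈ ℝᵐ the directional derivative ∂f/∂v(x̂) := lim_{t→0⁺} (f(x̂+tv)-f(x̂))/t exists and is linear in v, and (3) the upper tangent cone of graph(f) at (x̂, f(x̂)) is a linear subspace of dimension m. -/

import Mathlib

open Filter Metric Topology

/-- Upper tangent cone (sequential description) in a normed space. -/
def upperTangentCone {E : Type*} [NormedAddCommGroup E] [NormedSpace ℝ E]
    (S : Set E) (p : E) : Set E :=
  {w | ∃ (lam : ℕ → ℝ) (u : ℕ → E),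
      (∀ k, 0 < lam k) ∧ Filter.Tendsto lam Filter.atTop (𝓝 0) ∧
      (∀ k, u k ∈ S) ∧ Filter.Tendsto u Filter.atTop (𝓝 p) ∧
      Filter.Tendsto (fun k => (lam k)⁻¹ • (u k - p)) Filter.atTop (𝓝 w)}

section Helpers

variable {E F : Type*} [NormedAddCommGroup E] [NormedSpace ℝ E]
  [NormedAddCommGroup F] [NormedSpace ℝ F]

/-- If `f` is continuous within `A` at an interior point `x` and has directional derivative
`Dv` in direction `v`, then `(v, Dv)` lies in the upper tangent cone of the graph. -/
lemma mem_cone_of_dirDeriv (A : Set E) (f : E → F) (x : E) (hx : x ∈ interior A)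
    (hc : ContinuousWithinAt f A x) (v : E) (Dv : F)
    (hD : Tendsto (fun t : ℝ => t⁻¹ • (f (x + t • v) - f x)) (𝓝[>] (0:ℝ)) (𝓝 Dv)) :
    (v, Dv) ∈ upperTangentCone {p : E × F | p.1 ∈ A ∧ p.2 = f p.1} (x, f x) := by
  obtain ⟨r, hr, hball⟩ := Metric.mem_nhds_iff.mp (mem_interior_iff_mem_nhds.mp hx)
  set t0 : ℝ := r / (2 * (‖v‖ + 1)) with ht0def
  have ht0 : 0 < t0 := div_pos hr (by positivity)
  set lam : ℕ → ℝ := fun n => t0 / (n + 1) with hlamdef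
  have hlampos : ∀ n, 0 < lam n := fun n => div_pos ht0 (by positivity)
  have hlam0 : Tendsto lam atTop (𝓝 0) := by
    have h1 := tendsto_one_div_add_atTop_nhds_zero_nat.const_mul t0
    simpa [hlamdef, div_eq_mul_inv, one_div] using h1
  have hmem : ∀ n, x + lam n • v ∈ A := by
    intro n
    apply hball
    rw [mem_ball_iff_norm]
    have h1 : ‖x + lam n • v - x‖ = lam n * ‖v‖ := by
      rw [add_sub_cancel_left, norm_smul, Real.norm_eq_abs, abs_of_pos (hlampos n)]
    rw [h1]
    have hlamle : lam n ≤ t0 := by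
      rw [hlamdef]
      apply div_le_of_le_mul₀ (by positivity) (le_of_lt ht0)
      nlinarith [ht0]
    have h2 : lam n * ‖v‖ ≤ t0 * (‖v‖ + 1) :=
      mul_le_mul hlamle (by linarith) (norm_nonneg v) (le_of_lt ht0)
    have h3 : t0 * (‖v‖ + 1) = r / 2 := by
      rw [ht0def]
      field_simp
    linarith
  have hlamW : Tendsto lam atTop (𝓝[>] (0:ℝ)) :=
    tendsto_nhdsWithin_of_tendsto_nhds_of_eventually_within lam hlam0
      (Eventually.of_forall hlampos)
  have hq : Tendsto (fun n => (lam n)⁻¹ • (f (x + lam n • v) - f x)) atTop (𝓝 Dv) :=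
    hD.comp hlamW
  have ha : Tendsto (fun n => x + lam n • v) atTop (𝓝 x) := by
    have := (hlam0.smul_const v).const_add x
    simpa using this
  have hfa : Tendsto (fun n => f (x + lam n • v)) atTop (𝓝 (f x)) :=
    hc.tendsto.comp (tendsto_nhdsWithin_iff.mpr ⟨ha, Eventually.of_forall hmem⟩)
  refine ⟨lam, fun n => (x + lam n • v, f (x + lam n • v)), hlampos, hlam0,
    fun n => ⟨hmem n, rfl⟩, ha.prodMk_nhds hfa, ?_⟩
  have heq : ∀ n, (lam n)⁻¹ • ((x + lam n • v, f (x + lam n • v)) - (x, f x))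
      = (v, (lam n)⁻¹ • (f (x + lam n • v) - f x)) := by
    intro n
    rw [Prod.mk_sub_mk, Prod.smul_mk, add_sub_cancel_left, smul_smul,
      inv_mul_cancel₀ (ne_of_gt (hlampos n)), one_smul]
  simpa only [heq] using (tendsto_const_nhds.prodMk_nhds hq)

/-- Any vector in the upper tangent cone of the graph of a differentiable function lies
in the graph of the derivative. -/
lemma cone_subset_graph {A : Set E} {f : E → F} {x : E} {D' : E →L[ℝ] F}
    (hf : HasFDerivAt f D' x) {w : E × F}
    (hw : w ∈ upperTangentCone {p : E × F | p.1 ∈ A ∧ p.2 = f p.1} (x, f x)) :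
    w.2 = D' w.1 := by
  obtain ⟨lam, u, hpos, hlam, huS, hup, hwlim⟩ := hw
  set a : ℕ → E := fun n => (u n).1 with hadef
  have hu2 : ∀ n, (u n).2 = f (a n) := fun n => (huS n).2
  have ha : Tendsto a atTop (𝓝 x) := (continuous_fst.tendsto _).comp hup
  have hw1 : Tendsto (fun n => (lam n)⁻¹ • (a n - x)) atTop (𝓝 w.1) := by
    have := (continuous_fst.tendsto _).comp hwlim
    simpa [hadef, Function.comp_def] using this
  have hw2 : Tendsto (fun n => (lam n)⁻¹ • (f (a n) - f x)) atTop (𝓝 w.2) := by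
    have := (continuous_snd.tendsto _).comp hwlim
    simp only [Function.comp_def] at this
    refine this.congr fun n => ?_
    simp [hu2 n]
  have hbig : (fun n => a n - x) =O[atTop] (fun n => lam n) := by
    rw [Asymptotics.isBigO_iff]
    refine ⟨‖w.1‖ + 1, ?_⟩
    have hev : ∀ᶠ n in atTop, ‖(lam n)⁻¹ • (a n - x)‖ < ‖w.1‖ + 1 :=
      hw1.norm.eventually_lt_const (by linarith [norm_nonneg w.1])
    filter_upwards [hev] with n hn
    have hlp := hpos n
    have h1 : ‖(lam n)⁻¹ • (a n - x)‖ = (lam n)⁻¹ * ‖a n - x‖ := by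
      rw [norm_smul, Real.norm_eq_abs, abs_of_pos (by positivity)]
    rw [h1] at hn
    have : ‖a n - x‖ = lam n * ((lam n)⁻¹ * ‖a n - x‖) := by
      field_simp
    rw [this, Real.norm_eq_abs, abs_of_pos hlp]
    nlinarith [norm_nonneg (a n - x)]
  have ho : (fun n => f (a n) - f x - D' (a n - x)) =o[atTop] (fun n => lam n) :=
    ((hf.isLittleO).comp_tendsto ha).trans_isBigO hbig
  have h0 : Tendsto (fun n => (lam n)⁻¹ • (f (a n) - f x - D' (a n - x))) atTop (𝓝 0) :=
    ho.tendsto_inv_smul_nhds_zero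
  have hDc : Tendsto (fun n => D' ((lam n)⁻¹ • (a n - x))) atTop (𝓝 (D' w.1)) :=
    (D'.continuous.tendsto _).comp hw1
  have h1 : Tendsto (fun n => (lam n)⁻¹ • (f (a n) - f x - D' (a n - x))) atTop
      (𝓝 (w.2 - D' w.1)) := by
    have := hw2.sub hDc
    refine this.congr fun n => ?_
    simp only [map_smul]; simp only [smul_sub]
  have := tendsto_nhds_unique h1 h0
  exact sub_eq_zero.mp this

lemma finrank_graph (D : E →ₗ[ℝ] F) [FiniteDimensional ℝ E] :
    Module.finrank ℝ (LinearMap.graph D) = Module.finrank ℝ E := by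
  rw [LinearMap.graph_eq_range_prod]
  exact LinearMap.finrank_range_of_inj fun a b h => congrArg Prod.fst h

end Helpers

set_option maxHeartbeats 1000000 in
/-- Differentiability at an interior point is equivalent to: continuity, linearity of the
directional derivatives, and the upper tangent cone of the graph being an `m`-dimensional
linear subspace. -/
theorem differentiability_at_interior_point {m k : ℕ}
    (A : Set (EuclideanSpace ℝ (Fin m)))
    (f : EuclideanSpace ℝ (Fin m) → EuclideanSpace ℝ (Fin k))
    (x : EuclideanSpace ℝ (Fin m)) (hx : x ∈ interior A) :
    DifferentiableWithinAt ℝ f A x ↔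
      (ContinuousWithinAt f A x ∧
       (∃ D : EuclideanSpace ℝ (Fin m) →ₗ[ℝ] EuclideanSpace ℝ (Fin k),
          ∀ v, Filter.Tendsto (fun t : ℝ => t⁻¹ • (f (x + t • v) - f x))
            (𝓝[>] (0:ℝ)) (𝓝 (D v))) ∧
       (∃ W : Submodule ℝ (EuclideanSpace ℝ (Fin m) × EuclideanSpace ℝ (Fin k)),
          (W : Set (EuclideanSpace ℝ (Fin m) × EuclideanSpace ℝ (Fin k)))
              = upperTangentCone
                  {p : EuclideanSpace ℝ (Fin m) × EuclideanSpace ℝ (Fin k) |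
                    p.1 ∈ A ∧ p.2 = f p.1} (x, f x) ∧
          Module.finrank ℝ W = m)) := by
  have hA : A ∈ 𝓝 x := mem_interior_iff_mem_nhds.mp hx
  constructor
  · intro hdiff
    have hd : DifferentiableAt ℝ f x := hdiff.differentiableAt hA
    obtain ⟨D', hD'⟩ : ∃ D', HasFDerivAt f D' x := hd
    have hc : ContinuousWithinAt f A x := hdiff.continuousWithinAt
    have hdir : ∀ v, Tendsto (fun t : ℝ => t⁻¹ • (f (x + t • v) - f x))
        (𝓝[>] (0:ℝ)) (𝓝 (D' v)) := by
      intro v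
      have h1 : HasDerivAt (fun t : ℝ => f (x + t • v)) (D' v) 0 := hD'.hasLineDerivAt v
      have h2 := hasDerivAt_iff_tendsto_slope.mp h1
      have h3 : Tendsto (slope (fun t : ℝ => f (x + t • v)) 0) (𝓝[>] (0:ℝ)) (𝓝 (D' v)) :=
        h2.mono_left (nhdsWithin_mono _ fun t ht => ne_of_gt ht)
      refine h3.congr fun t => ?_
      simp [slope_def_module]
    refine ⟨hc, ⟨D'.toLinearMap, by simpa using hdir⟩,
      LinearMap.graph D'.toLinearMap, ?_, ?_⟩
    · apply Set.Subset.antisymm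
      · intro p hp
        rw [SetLike.mem_coe, LinearMap.mem_graph_iff] at hp
        have h2 : p = (p.1, D' p.1) := by
          refine Prod.ext rfl ?_
          simpa using hp
        rw [h2]
        exact mem_cone_of_dirDeriv A f x hx hc p.1 (D' p.1) (hdir p.1)
      · intro w hw
        rw [SetLike.mem_coe, LinearMap.mem_graph_iff]
        simpa using cone_subset_graph hD' hw
    · rw [finrank_graph, finrank_euclideanSpace_fin]
  · rintro ⟨hc, ⟨D, hD⟩, ⟨W, hWeq, hWrank⟩⟩
    set D' : EuclideanSpace ℝ (Fin m) →L[ℝ] EuclideanSpace ℝ (Fin k) :=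
      LinearMap.toContinuousLinearMap D with hD'def
    have hD'coe : ∀ v, D' v = D v := fun v => rfl
    -- the graph of `D` is contained in `W`
    have hgle : LinearMap.graph D ≤ W := by
      intro p hp
      rw [LinearMap.mem_graph_iff] at hp
      have h2 : p = (p.1, D p.1) := Prod.ext rfl hp
      have h3 : ((p.1, D p.1) : EuclideanSpace ℝ (Fin m) × EuclideanSpace ℝ (Fin k))
          ∈ (W : Set _) := by
        rw [hWeq]
        exact mem_cone_of_dirDeriv A f x hx hc p.1 (D p.1) (hD p.1)
      rw [h2]
      exact h3
    have hgeq : LinearMap.graph D = W :=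
      Submodule.eq_of_le_of_finrank_le hgle
        (by rw [hWrank, finrank_graph, finrank_euclideanSpace_fin])
    suffices h : HasFDerivWithinAt f D' A x from h.differentiableWithinAt
    rw [hasFDerivWithinAt_iff_tendsto]
    by_contra hcon
    rw [Metric.tendsto_nhds] at hcon
    push_neg at hcon
    obtain ⟨ε, hε, hfreq⟩ := hcon
    obtain ⟨y, hy, hyP⟩ := Filter.exists_seq_forall_of_frequently hfreq
    have hyP' : ∀ n, ε ≤ ‖y n - x‖⁻¹ * ‖f (y n) - f x - D' (y n - x)‖ := by
      intro n
      have := hyP n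
      rw [Real.dist_eq] at this
      calc ε ≤ |‖y n - x‖⁻¹ * ‖f (y n) - f x - D' (y n - x)‖ - 0| := this
        _ = ‖y n - x‖⁻¹ * ‖f (y n) - f x - D' (y n - x)‖ := by
            rw [sub_zero, abs_of_nonneg (by positivity)]
    obtain ⟨N, hN⟩ := eventually_atTop.mp (hy.eventually self_mem_nhdsWithin)
    set z : ℕ → EuclideanSpace ℝ (Fin m) := fun n => y (n + N) with hzdef
    have hzA : ∀ n, z n ∈ A := fun n => hN (n + N) (Nat.le_add_left N n)
    have hz : Tendsto z atTop (𝓝[A] x) := hy.comp (tendsto_add_atTop_nat N)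
    have hzP : ∀ n, ε ≤ ‖z n - x‖⁻¹ * ‖f (z n) - f x - D' (z n - x)‖ :=
      fun n => hyP' (n + N)
    have hne : ∀ n, z n ≠ x := by
      intro n h
      have := hzP n
      rw [h] at this
      simp at this
      linarith
    have hnormpos : ∀ n, 0 < ‖z n - x‖ :=
      fun n => norm_pos_iff.mpr (sub_ne_zero.mpr (hne n))
    have hlow : ∀ n, ε * ‖z n - x‖ ≤ ‖f (z n) - f x - D' (z n - x)‖ := by
      intro n
      have h1 := mul_le_mul_of_nonneg_right (hzP n) (le_of_lt (hnormpos n))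
      calc ε * ‖z n - x‖ ≤ ‖z n - x‖⁻¹ * ‖f (z n) - f x - D' (z n - x)‖ * ‖z n - x‖ := h1
        _ = ‖f (z n) - f x - D' (z n - x)‖ := by
            rw [mul_comm (‖z n - x‖⁻¹) _, mul_assoc,
              inv_mul_cancel₀ (ne_of_gt (hnormpos n)), mul_one]
    set lam : ℕ → ℝ := fun n => ‖((z n - x, f (z n) - f x) :
      EuclideanSpace ℝ (Fin m) × EuclideanSpace ℝ (Fin k))‖ with hlamdef
    have hlampos : ∀ n, 0 < lam n := by
      intro n
      have h1 := norm_fst_le ((z n - x, f (z n) - f x) :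
        EuclideanSpace ℝ (Fin m) × EuclideanSpace ℝ (Fin k))
      exact lt_of_lt_of_le (hnormpos n) h1
    have hzx : Tendsto z atTop (𝓝 x) := hz.mono_right nhdsWithin_le_nhds
    have hfz : Tendsto (fun n => f (z n)) atTop (𝓝 (f x)) := hc.tendsto.comp hz
    have hlam0 : Tendsto lam atTop (𝓝 0) := by
      have h1a : Tendsto (fun n => z n - x) atTop (𝓝 (0 : EuclideanSpace ℝ (Fin m))) := by
        simpa using hzx.sub (tendsto_const_nhds : Tendsto (fun _ : ℕ => x) atTop (𝓝 x))
      have h1b : Tendsto (fun n => f (z n) - f x) atTop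
          (𝓝 (0 : EuclideanSpace ℝ (Fin k))) := by
        simpa using hfz.sub (tendsto_const_nhds : Tendsto (fun _ : ℕ => f x) atTop (𝓝 (f x)))
      have h1 : Tendsto (fun n => ((z n - x, f (z n) - f x) :
          EuclideanSpace ℝ (Fin m) × EuclideanSpace ℝ (Fin k))) atTop (𝓝 (0, 0)) :=
        h1a.prodMk_nhds h1b
      have := h1.norm
      simpa [hlamdef] using this
    set w : ℕ → EuclideanSpace ℝ (Fin m) × EuclideanSpace ℝ (Fin k) :=
      fun n => (lam n)⁻¹ • ((z n - x, f (z n) - f x) :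
        EuclideanSpace ℝ (Fin m) × EuclideanSpace ℝ (Fin k)) with hwdef
    have hwsph : ∀ n, w n ∈ sphere (0 : EuclideanSpace ℝ (Fin m) ×
        EuclideanSpace ℝ (Fin k)) 1 := by
      intro n
      rw [mem_sphere_zero_iff_norm, hwdef, norm_smul, Real.norm_eq_abs,
        abs_of_pos (inv_pos.mpr (hlampos n)), hlamdef]
      exact inv_mul_cancel₀ (ne_of_gt (hlampos n))
    obtain ⟨winf, hwinf, φ, hφ, hconv⟩ := (isCompact_sphere _ _).tendsto_subseq hwsph
    -- winf lies in the upper tangent cone, hence in the graph of D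
    have hwincone : winf ∈ upperTangentCone
        {p : EuclideanSpace ℝ (Fin m) × EuclideanSpace ℝ (Fin k) |
          p.1 ∈ A ∧ p.2 = f p.1} (x, f x) := by
      refine ⟨fun n => lam (φ n), fun n => (z (φ n), f (z (φ n))),
        fun n => hlampos _, hlam0.comp hφ.tendsto_atTop,
        fun n => ⟨hzA _, rfl⟩, (hzx.prodMk_nhds hfz).comp hφ.tendsto_atTop, ?_⟩
      refine hconv.congr fun n => ?_
      rw [hwdef]
      simp [Prod.mk_sub_mk]
    have hwgraph : winf.2 = D winf.1 := by
      have h1 : winf ∈ (W : Set _) := hWeq ▸ hwincone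
      rw [← hgeq] at h1
      exact (LinearMap.mem_graph_iff _ _).mp h1
    have hwnorm : ‖winf‖ = 1 := mem_sphere_zero_iff_norm.mp hwinf
    have hw1ne : winf.1 ≠ 0 := by
      intro h
      have h2 : winf.2 = 0 := by rw [hwgraph, h, map_zero]
      have : winf = 0 := Prod.ext h h2
      rw [this] at hwnorm
      simp at hwnorm
    have hA1 : Tendsto (fun n => (lam (φ n))⁻¹ • (z (φ n) - x)) atTop (𝓝 winf.1) := by
      have := (continuous_fst.tendsto _).comp hconv
      refine this.congr fun n => ?_
      simp [hwdef]
    have hA2 : Tendsto (fun n => (lam (φ n))⁻¹ • (f (z (φ n)) - f x)) atTop (𝓝 winf.2) := by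
      have := (continuous_snd.tendsto _).comp hconv
      refine this.congr fun n => ?_
      simp [hwdef]
    have hg : Tendsto (fun n => (lam (φ n))⁻¹ •
        (f (z (φ n)) - f x - D' (z (φ n) - x))) atTop (𝓝 0) := by
      have h1 : Tendsto (fun n => (lam (φ n))⁻¹ •
          (f (z (φ n)) - f x - D' (z (φ n) - x))) atTop (𝓝 (winf.2 - D' winf.1)) := by
        have := hA2.sub ((D'.continuous.tendsto _).comp hA1)
        refine this.congr fun n => ?_
        simp only [Function.comp_apply, ← smul_sub, map_smul]
      have h2 : winf.2 - D' winf.1 = 0 := by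
        rw [hD'coe, ← hwgraph, sub_self]
      rwa [h2] at h1
    have hlower : ∀ n, ε * ‖(lam (φ n))⁻¹ • (z (φ n) - x)‖ ≤
        ‖(lam (φ n))⁻¹ • (f (z (φ n)) - f x - D' (z (φ n) - x))‖ := by
      intro n
      rw [norm_smul, norm_smul, Real.norm_eq_abs,
        abs_of_pos (inv_pos.mpr (hlampos (φ n)))]
      have h1 := mul_le_mul_of_nonneg_left (hlow (φ n))
        (le_of_lt (inv_pos.mpr (hlampos (φ n))))
      calc ε * ((lam (φ n))⁻¹ * ‖z (φ n) - x‖)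
          = (lam (φ n))⁻¹ * (ε * ‖z (φ n) - x‖) := by ring
        _ ≤ (lam (φ n))⁻¹ * ‖f (z (φ n)) - f x - D' (z (φ n) - x)‖ := h1
    have hL : Tendsto (fun n => ε * ‖(lam (φ n))⁻¹ • (z (φ n) - x)‖) atTop
        (𝓝 (ε * ‖winf.1‖)) := hA1.norm.const_mul ε
    have hR : Tendsto (fun n => ‖(lam (φ n))⁻¹ •
        (f (z (φ n)) - f x - D' (z (φ n) - x))‖) atTop (𝓝 0) := by
      have := hg.norm
      simpa using this
    have hfinal : ε * ‖winf.1‖ ≤ 0 := le_of_tendsto_of_tendsto' hL hR hlower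
    have : 0 < ‖winf.1‖ := norm_pos_iff.mpr hw1ne
    nlinarith
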